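/- Let ν ≥ 0 and let f(x) = x^{-1/2} e^{-x/2} / (√2 · Γ(1/2)) for x > 0 be the density of the chi-squared distribution with one degree of freedom, and let m₁ = ∫_0^∞ max(x − ν, 0) · f(x) dx. Then the second moment of the soft-thresholded variable satisfies ∫_0^∞ (max(x − ν, 0))² · f(x) dx = (1/Γ(1/2)) · ( 3 · ∫_{ν/2}^∞ t^{-1/2} e^{-t} dt + e^{-ν/2} · √(2ν) · (3 + ν) ) − 2ν · m₁ − ν² · ∫_ν^∞ f(x) dx. -/

import Mathlib

open MeasureTheory Real Set

lemma intOn_rpow_exp {q a : ℝ} (hq : -1 < q) (ha : 0 ≤ a) :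
    IntegrableOn (fun t : ℝ => t ^ q * Real.exp (-t)) (Ioi a) := by
  have h := Real.GammaIntegral_convergent (s := q + 1) (by linarith)
  have h2 : IntegrableOn (fun t : ℝ => t ^ q * Real.exp (-t)) (Ioi 0) := by
    simpa [mul_comm, add_sub_cancel_right] using h
  exact h2.mono_set (Ioi_subset_Ioi ha)

lemma intOn_rpow_exp_half {q ν : ℝ} (hq : -1 < q) (hν : 0 ≤ ν) :
    IntegrableOn (fun x : ℝ => x ^ q * Real.exp (-x/2)) (Ioi ν) := by
  have h : IntegrableOn (fun t : ℝ => t ^ q * Real.exp (-t)) (Ioi ((1/2) * ν)) :=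
    intOn_rpow_exp hq (by linarith)
  have h2 := (integrableOn_Ioi_comp_mul_left_iff
      (fun t : ℝ => t ^ q * Real.exp (-t)) ν (a := 1/2) (by norm_num)).2 h
  refine IntegrableOn.congr_fun (h2.smul ((2:ℝ)^q)) (fun x hx => ?_) measurableSet_Ioi
  have hx0 : 0 < x := lt_of_le_of_lt hν hx
  have : ((1:ℝ)/2 * x) ^ q = (1/2 : ℝ)^q * x ^ q := Real.mul_rpow (by norm_num) hx0.le
  have h12 : ((1:ℝ)/2 : ℝ)^q * (2:ℝ)^q = 1 := by
    rw [← Real.mul_rpow (by norm_num) (by norm_num)]; norm_num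
  have harg : -((1:ℝ)/2 * x) = -x/2 := by ring
  simp only [smul_eq_mul, Pi.smul_apply, this, harg]
  linear_combination (x^q * Real.exp (-x/2)) * h12

lemma ibp_rpow_exp {p a : ℝ} (hp : 0 < p) (ha : 0 ≤ a) :
    ∫ t in Ioi a, t ^ p * Real.exp (-t)
      = a ^ p * Real.exp (-a) + p * ∫ t in Ioi a, t ^ (p-1) * Real.exp (-t) := by
  have hint1 : IntegrableOn (fun t : ℝ => t ^ p * Real.exp (-t)) (Ioi a) :=
    intOn_rpow_exp (by linarith) ha
  have hint2 : IntegrableOn (fun t : ℝ => t ^ (p-1) * Real.exp (-t)) (Ioi a) :=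
    intOn_rpow_exp (by linarith) ha
  have hint2' : IntegrableOn (fun t : ℝ => p * (t ^ (p-1) * Real.exp (-t))) (Ioi a) :=
    hint2.const_mul p
  have hderiv : ∀ t ∈ Ioi a, HasDerivAt (fun t : ℝ => t ^ p * Real.exp (-t))
      (p * (t ^ (p-1) * Real.exp (-t)) - t ^ p * Real.exp (-t)) t := by
    intro t ht
    have ht0 : t ≠ 0 := (lt_of_le_of_lt ha ht).ne'
    have h1 : HasDerivAt (fun t : ℝ => t ^ p) (p * t ^ (p-1)) t :=
      Real.hasDerivAt_rpow_const (Or.inl ht0)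
    have h2 : HasDerivAt (fun t : ℝ => Real.exp (-t)) (-Real.exp (-t)) t := by
      simpa using (hasDerivAt_neg t).exp
    refine (h1.mul h2).congr_deriv ?_
    ring
  have htend : Filter.Tendsto (fun t : ℝ => t ^ p * Real.exp (-t)) Filter.atTop (nhds 0) := by
    simpa using tendsto_rpow_mul_exp_neg_mul_atTop_nhds_zero p 1 one_pos
  have hcont : ContinuousWithinAt (fun t : ℝ => t ^ p * Real.exp (-t)) (Ici a) a := by
    apply ContinuousWithinAt.mul _ (Real.continuous_exp.comp continuous_neg).continuousWithinAt
    exact (Real.continuousAt_rpow_const a p (Or.inr hp.le)).continuousWithinAt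
  have key := integral_Ioi_of_hasDerivAt_of_tendsto hcont hderiv
      (hint2'.sub hint1) htend
  rw [integral_sub hint2' hint1, integral_const_mul] at key
  linarith [key]

lemma subst_half {q : ℝ} (ν : ℝ) (hν : 0 ≤ ν) :
    ∫ x in Ioi ν, x ^ q * Real.exp (-x/2)
      = 2 ^ (q+1) * ∫ t in Ioi (ν/2), t ^ q * Real.exp (-t) := by
  have hg := integral_comp_mul_left_Ioi (fun t : ℝ => t ^ q * Real.exp (-t)) ν
      (b := 1/2) (by norm_num)
  have hpt : ∀ x ∈ Ioi ν, x ^ q * Real.exp (-x/2)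
      = (2:ℝ)^q * ((1/2*x) ^ q * Real.exp (-(1/2*x))) := by
    intro x hx
    have hx0 : 0 < x := lt_of_le_of_lt hν hx
    have h1 : ((1:ℝ)/2 * x) ^ q = (1/2 : ℝ)^q * x ^ q := Real.mul_rpow (by norm_num) hx0.le
    have h12 : ((1:ℝ)/2 : ℝ)^q * (2:ℝ)^q = 1 := by
      rw [← Real.mul_rpow (by norm_num) (by norm_num)]; norm_num
    have harg : -((1:ℝ)/2 * x) = -x/2 := by ring
    rw [h1, harg]
    linear_combination (-(x^q * Real.exp (-x/2))) * h12
  calc ∫ x in Ioi ν, x ^ q * Real.exp (-x/2)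
      = ∫ x in Ioi ν, (2:ℝ)^q * ((1/2*x) ^ q * Real.exp (-(1/2*x))) :=
        setIntegral_congr_fun measurableSet_Ioi hpt
    _ = (2:ℝ)^q * ∫ x in Ioi ν, ((1/2*x) ^ q * Real.exp (-(1/2*x))) := integral_const_mul _ _
    _ = (2:ℝ)^q * (((1:ℝ)/2)⁻¹ • ∫ t in Ioi (1/2*ν), t ^ q * Real.exp (-t)) := by rw [hg]
    _ = 2 ^ (q+1) * ∫ t in Ioi (ν/2), t ^ q * Real.exp (-t) := by
        rw [show (1/2*ν ) = ν/2 by ring, Real.rpow_add_one (by norm_num) q]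
        simp [smul_eq_mul]; ring

/-- Second moment of the soft-thresholded chi-squared(1) variable:
`E[(X - ν)₊²] = (1/Γ(1/2)) (3 Γ(1/2, ν/2) + e^{-ν/2} √(2ν) (3 + ν)) - 2ν m₁ - ν² ℙ(X > ν)`. -/
theorem softthreshold_second_moment (ν : ℝ) (hν : 0 ≤ ν)
    (f : ℝ → ℝ)
    (hf : ∀ x, f x = x ^ (-(1 : ℝ)/2) * Real.exp (-x/2) / (Real.sqrt 2 * Real.Gamma (1/2)))
    (m₁ : ℝ) (hm₁ : m₁ = ∫ x in Ioi (0 : ℝ), max (x - ν) 0 * f x) :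
    ∫ x in Ioi (0 : ℝ), (max (x - ν) 0) ^ 2 * f x =
      (1 / Real.Gamma (1/2)) *
          (3 * (∫ t in Ioi (ν/2), t ^ (-(1 : ℝ)/2) * Real.exp (-t)) +
            Real.exp (-ν/2) * Real.sqrt (2 * ν) * (3 + ν))
        - 2 * ν * m₁ - ν ^ 2 * ∫ x in Ioi ν, f x := by
  have hΓ : 0 < Real.Gamma (1/2) := Real.Gamma_pos_of_pos (by norm_num)
  have hs2 : (0:ℝ) < Real.sqrt 2 := Real.sqrt_pos.2 (by norm_num)
  set C : ℝ := Real.sqrt 2 * Real.Gamma (1/2) with hC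
  have hC0 : C ≠ 0 := by positivity
  -- abbreviations
  set I3 : ℝ := ∫ x in Ioi ν, x ^ ((3:ℝ)/2) * Real.exp (-x/2) with hI3
  set I1 : ℝ := ∫ x in Ioi ν, x ^ ((1:ℝ)/2) * Real.exp (-x/2) with hI1
  set I0 : ℝ := ∫ x in Ioi ν, x ^ (-(1:ℝ)/2) * Real.exp (-x/2) with hI0
  set J0 : ℝ := ∫ t in Ioi (ν/2), t ^ (-(1:ℝ)/2) * Real.exp (-t) with hJ0
  have A3 : IntegrableOn (fun x : ℝ => x ^ ((3:ℝ)/2) * Real.exp (-x/2)) (Ioi ν) :=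
    intOn_rpow_exp_half (by norm_num) hν
  have A1 : IntegrableOn (fun x : ℝ => x ^ ((1:ℝ)/2) * Real.exp (-x/2)) (Ioi ν) :=
    intOn_rpow_exp_half (by norm_num) hν
  have A0 : IntegrableOn (fun x : ℝ => x ^ (-(1:ℝ)/2) * Real.exp (-x/2)) (Ioi ν) :=
    intOn_rpow_exp_half (by norm_num) hν
  -- step A : restrict integrals to Ioi ν
  have hinter : Ioi (0:ℝ) ∩ Ioi ν = Ioi ν := by
    rw [Ioi_inter_Ioi, sup_eq_right.mpr hν]
  have hL : (∫ x in Ioi (0:ℝ), (max (x - ν) 0) ^ 2 * f x)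
      = ∫ x in Ioi ν, (x - ν)^2 * f x := by
    have hind : ∀ x ∈ Ioi (0:ℝ), (max (x - ν) 0) ^ 2 * f x
        = (Ioi ν).indicator (fun x => (x - ν)^2 * f x) x := by
      intro x _
      rcases le_or_gt x ν with h | h
      · rw [max_eq_right (by linarith), indicator_of_notMem (by simpa using h.not_gt)]
        ring
      · rw [max_eq_left (by linarith), indicator_of_mem (mem_Ioi.mpr h)]
    rw [setIntegral_congr_fun measurableSet_Ioi hind,
      setIntegral_indicator measurableSet_Ioi, hinter]
  have hM : (∫ x in Ioi (0:ℝ), max (x - ν) 0 * f x)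
      = ∫ x in Ioi ν, (x - ν) * f x := by
    have hind : ∀ x ∈ Ioi (0:ℝ), max (x - ν) 0 * f x
        = (Ioi ν).indicator (fun x => (x - ν) * f x) x := by
      intro x _
      rcases le_or_gt x ν with h | h
      · rw [max_eq_right (by linarith), indicator_of_notMem (by simp [h])]
        ring
      · rw [max_eq_left (by linarith), indicator_of_mem (mem_Ioi.mpr h)]
    rw [setIntegral_congr_fun measurableSet_Ioi hind,
      setIntegral_indicator measurableSet_Ioi, hinter]
  -- step B : expand the integrands
  have e2 : (∫ x in Ioi ν, (x - ν)^2 * f x)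
      = (1/C) * I3 - (2*ν/C) * I1 + (ν^2/C) * I0 := by
    have hpt : ∀ x ∈ Ioi ν, (x - ν)^2 * f x
        = (1/C) * (x ^ ((3:ℝ)/2) * Real.exp (-x/2))
          - (2*ν/C) * (x ^ ((1:ℝ)/2) * Real.exp (-x/2))
          + (ν^2/C) * (x ^ (-(1:ℝ)/2) * Real.exp (-x/2)) := by
      intro x hx
      have hx0 : (0:ℝ) < x := lt_of_le_of_lt hν hx
      have h32 : x ^ ((3:ℝ)/2) = x^2 * x ^ (-(1:ℝ)/2) := by
        rw [show ((3:ℝ)/2) = ((2:ℕ):ℝ) + (-(1:ℝ)/2) by norm_num, Real.rpow_add hx0,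
          Real.rpow_natCast]
      have h12 : x ^ ((1:ℝ)/2) = x * x ^ (-(1:ℝ)/2) := by
        rw [show ((1:ℝ)/2) = (1:ℝ) + (-(1:ℝ)/2) by norm_num, Real.rpow_add hx0,
          Real.rpow_one]
      rw [hf, h32, h12]
      field_simp
      ring
    have B3 : IntegrableOn (fun x : ℝ => (1/C) * (x ^ ((3:ℝ)/2) * Real.exp (-x/2))
        - (2*ν/C) * (x ^ ((1:ℝ)/2) * Real.exp (-x/2))) (Ioi ν) :=
      (A3.const_mul _).sub (A1.const_mul _)
    have B0 : IntegrableOn (fun x : ℝ => (ν^2/C) * (x ^ (-(1:ℝ)/2) * Real.exp (-x/2))) (Ioi ν) :=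
      A0.const_mul _
    rw [setIntegral_congr_fun measurableSet_Ioi hpt,
      integral_add B3 B0,
      integral_sub (A3.const_mul _) (A1.const_mul _),
      integral_const_mul, integral_const_mul, integral_const_mul]
  have e1 : (∫ x in Ioi ν, (x - ν) * f x) = (1/C) * I1 - (ν/C) * I0 := by
    have hpt : ∀ x ∈ Ioi ν, (x - ν) * f x
        = (1/C) * (x ^ ((1:ℝ)/2) * Real.exp (-x/2))
          - (ν/C) * (x ^ (-(1:ℝ)/2) * Real.exp (-x/2)) := by
      intro x hx
      have hx0 : (0:ℝ) < x := lt_of_le_of_lt hν hx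
      have h12 : x ^ ((1:ℝ)/2) = x * x ^ (-(1:ℝ)/2) := by
        rw [show ((1:ℝ)/2) = (1:ℝ) + (-(1:ℝ)/2) by norm_num, Real.rpow_add hx0,
          Real.rpow_one]
      rw [hf, h12]
      field_simp
    rw [setIntegral_congr_fun measurableSet_Ioi hpt,
      integral_sub (A1.const_mul _) (A0.const_mul _),
      integral_const_mul, integral_const_mul]
  have e0 : (∫ x in Ioi ν, f x) = (1/C) * I0 := by
    have hpt : ∀ x ∈ Ioi ν, f x
        = (1/C) * (x ^ (-(1:ℝ)/2) * Real.exp (-x/2)) := by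
      intro x _
      rw [hf]; ring
    rw [setIntegral_congr_fun measurableSet_Ioi hpt, integral_const_mul]
  -- step C : compute I3
  have ha2 : (0:ℝ) ≤ ν/2 := by linarith
  have hJ3 := ibp_rpow_exp (p := (3:ℝ)/2) (by norm_num) ha2
  have hJ1 := ibp_rpow_exp (p := (1:ℝ)/2) (by norm_num) ha2
  simp only [show ((3:ℝ)/2 - 1) = (1:ℝ)/2 by norm_num] at hJ3
  simp only [show ((1:ℝ)/2 - 1) = -(1:ℝ)/2 by norm_num] at hJ1
  have hsub := subst_half (q := (3:ℝ)/2) ν hν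
  have h52 : (2:ℝ) ^ ((3:ℝ)/2 + 1) = 4 * Real.sqrt 2 := by
    rw [show ((3:ℝ)/2 + 1) = ((2:ℕ):ℝ) + (1:ℝ)/2 by norm_num, Real.rpow_add (by norm_num),
      Real.rpow_natCast, ← Real.rpow_natCast 2 2, ← Real.sqrt_eq_rpow]
    norm_num [Real.rpow_natCast]
  have h32ν : (ν/2) ^ ((3:ℝ)/2) = (ν/2) * (ν/2) ^ ((1:ℝ)/2) := by
    rcases eq_or_lt_of_le ha2 with h | h
    · rw [← h, Real.zero_rpow (by norm_num), Real.zero_rpow (by norm_num)]; ring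
    · rw [show ((3:ℝ)/2) = (1:ℝ) + (1:ℝ)/2 by norm_num, Real.rpow_add h, Real.rpow_one]
  have hsq : Real.sqrt (2*ν) = 2 * (ν/2) ^ ((1:ℝ)/2) := by
    rw [show (2*ν : ℝ) = 4 * (ν/2) by ring, Real.sqrt_mul (by norm_num),
      show Real.sqrt 4 = 2 by
        rw [show (4:ℝ) = 2^2 by norm_num, Real.sqrt_sq (by norm_num)],
      Real.sqrt_eq_rpow]
  have hexp : Real.exp (-(ν/2)) = Real.exp (-ν/2) := by norm_num [neg_div]
  have key : I3 = Real.sqrt 2 * (3 * J0 + Real.exp (-ν/2) * Real.sqrt (2*ν) * (3 + ν)) := by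
    rw [hI3, hsub, hJ3, hJ1, h52, h32ν, hsq, hexp]
    ring
  -- conclude
  rw [hL, hm₁, hM, e2, e1, e0, key, hC]
  field_simp
  ring
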